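/- If an infinite word w over Σ₁ ∪ … ∪ Σₙ is such that for every i the projection w|_{Σᵢ} is a trace (finite or infinite) of the finite LTS Aᵢ, then w is a trace of the parallel composition A₁ ∥ … ∥ Aₙ. -/

import Mathlib

/-- A labelled transition system. -/
structure LTS (α S : Type) where
  init : S
  step : S → α → S → Prop

/-- Finite executions of a step relation. -/
inductive Exec {α S : Type} (step : S → α → S → Prop) : S → List α → S → Prop
  | nil (s : S) : Exec step s [] s
  | cons {s s' s'' : S} {a : α} {w : List α} :
      step s a s' → Exec step s' w s'' → Exec step s (a :: w) s''

/-- Finite traces of an LTS. -/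
def LTS.Tr {α S : Type} (L : LTS α S) (w : List α) : Prop :=
  ∃ s, Exec L.step L.init w s

/-- Step relation of the parallel composition `A₁ ∥ ⋯ ∥ Aₙ` (synchronization on
shared actions): on action `a`, every component whose alphabet contains `a`
takes an `a`-step, all other components stay put. -/
def parStep {α ι : Type} {S : ι → Type} (alph : ι → α → Bool) (A : ∀ i, LTS α (S i)) :
    (∀ i, S i) → α → (∀ i, S i) → Prop := fun s a s' =>
  ∀ i, (alph i a = true → (A i).step (s i) a (s' i)) ∧ (alph i a = false → s' i = s i)

/-- The parallel composition of the family `A`. -/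
def par {α ι : Type} {S : ι → Type} (alph : ι → α → Bool) (A : ∀ i, LTS α (S i)) :
    LTS α (∀ i, S i) :=
  ⟨fun i => (A i).init, parStep alph A⟩

theorem exec_states {α S : Type} {step : S → α → S → Prop} {s t : S} {l : List α}
    (h : Exec step s l t) :
    ∃ f : ℕ → S, f 0 = s ∧ ∀ m, ∀ hm : m < l.length, step (f m) (l.get ⟨m, hm⟩) (f (m + 1)) := by
  induction h with
  | nil s => exact ⟨fun _ => s, rfl, fun m hm => by simp at hm⟩
  | @cons s s' s'' a v hs _ ih =>
    obtain ⟨f, hf0, hf⟩ := ih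
    refine ⟨fun m => match m with | 0 => s | m + 1 => f m, rfl, ?_⟩
    intro m hm
    match m with
    | 0 => simpa [hf0] using hs
    | m + 1 => exact hf m (by simpa using hm)

/-- if an infinite word `w` over `Σ₁ ∪ ⋯ ∪ Σₙ` is such that for
every component `i` its projection onto `Σᵢ` (which may be finite or infinite)
is a trace of the finite LTS `Aᵢ`, then `w` is an infinite trace of the
parallel composition `A₁ ∥ ⋯ ∥ Aₙ`. -/
theorem infinite_word_trace_of_projections
    {α ι : Type} [Finite ι] {S : ι → Type} [∀ i, Finite (S i)]
    (alph : ι → α → Bool) (A : ∀ i, LTS α (S i))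
    (hA : ∀ i s a s', (A i).step s a s' → alph i a = true)
    (w : ℕ → α) (hw : ∀ k, ∃ i, alph i (w k) = true)
    (hproj : ∀ i,
      (∀ hfin : {k | alph i (w k) = true}.Finite,
        (A i).Tr (((List.range hfin.toFinset.card).map
          (Nat.nth fun k => alph i (w k) = true)).map w)) ∧
      ({k | alph i (w k) = true}.Infinite →
        ∃ τ : ℕ → S i, τ 0 = (A i).init ∧
          ∀ k, (A i).step (τ k) (w (Nat.nth (fun n => alph i (w n) = true) k)) (τ (k + 1)))) :
    ∃ ρ : ℕ → ∀ i, S i, ρ 0 = (fun i => (A i).init) ∧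
      ∀ k, parStep alph A (ρ k) (w k) (ρ (k + 1)) := by
  classical
  have key : ∀ i, ∃ σ : ℕ → S i, σ 0 = (A i).init ∧
      ∀ k, alph i (w k) = true →
        (A i).step (σ (Nat.count (fun n => alph i (w n) = true) k)) (w k)
          (σ (Nat.count (fun n => alph i (w n) = true) k + 1)) := by
    intro i
    set p : ℕ → Prop := fun n => alph i (w n) = true with hp
    by_cases hfin : (setOf p).Finite
    · obtain ⟨s, hexec⟩ := (hproj i).1 hfin
      obtain ⟨f, hf0, hf⟩ := exec_states hexec
      refine ⟨f, hf0, ?_⟩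
      intro k hk
      have hlt : Nat.count p k < hfin.toFinset.card := Nat.count_lt_card hfin hk
      have hlen : (((List.range hfin.toFinset.card).map (Nat.nth p)).map w).length
          = hfin.toFinset.card := by simp
      have h := hf (Nat.count p k) (by simp only [List.length_map, List.length_range]; exact hlt)
      simp only [List.get_eq_getElem, List.getElem_map, List.getElem_range] at h
      rwa [Nat.nth_count hk] at h
    · obtain ⟨τ, hτ0, hτ⟩ := (hproj i).2 hfin
      refine ⟨τ, hτ0, fun k hk => ?_⟩
      have h := hτ (Nat.count p k)
      rwa [Nat.nth_count hk] at h
  choose σ hσ0 hσ using key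
  refine ⟨fun k i => σ i (Nat.count (fun n => alph i (w n) = true) k), ?_, ?_⟩
  · funext i; simp [Nat.count_zero, hσ0]
  · intro k i
    constructor
    · intro h
      have hc : Nat.count (fun n => alph i (w n) = true) (k + 1)
          = Nat.count (fun n => alph i (w n) = true) k + 1 := by
        rw [Nat.count_succ]; simp [h]
      simp only [hc]
      exact hσ i k h
    · intro h
      have hc : Nat.count (fun n => alph i (w n) = true) (k + 1)
          = Nat.count (fun n => alph i (w n) = true) k := by
        rw [Nat.count_succ]; simp [h]
      simp only [hc]
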